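/- Let S be a measurable space, n ≥ 1, and Q a probability measure on S^{Λ_n}. Then the averaged periodization bar Q := (2n)^{−d} Σ_{i∈Λ_n} Q^per ∘ θ_i^{−1} is shift-invariant: bar Q ∘ θ_j^{−1} = bar Q for every j ∈ Z^d. -/

import Mathlib

open MeasureTheory Filter
open scoped ENNReal

/-- The lattice `ℤ^d`. -/
abbrev Zd (d : ℕ) := Fin d → ℤ

/-- The shift by vector `-i` on the configuration space `S^{ℤ^d}`:
`(θ_i ω)_j = ω_{j+i}`. -/
def shift (S : Type*) {d : ℕ} (i : Zd d) (ω : Zd d → S) : Zd d → S :=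
  fun j => ω (j + i)

/-- A measure on `S^{ℤ^d}` is shift-invariant if it is invariant under all shifts. -/
def ShiftInvariant {S : Type*} [MeasurableSpace S] {d : ℕ}
    (μ : Measure (Zd d → S)) : Prop :=
  ∀ i : Zd d, μ.map (shift S i) = μ

/-- The cube `Λ_n = {-n, …, n-1}^d` as a finite subset of `ℤ^d`. -/
noncomputable def cube (d n : ℕ) : Finset (Zd d) :=
  Finset.Icc (fun _ => -(n : ℤ)) (fun _ => (n : ℤ) - 1)

/-- The decomposition of a configuration `ω ∈ S^{ℤ^d}` into its `2n`-blocks: the block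
indexed by `k ∈ ℤ^d` is `(ω_{j + 2nk})_{j ∈ Λ_n}`. -/
def blockMap (S : Type*) (d n : ℕ) (ω : Zd d → S) : Zd d → (cube d n → S) :=
  fun k j => ω (fun l => (j : Zd d) l + (2 * (n : ℤ)) * k l)

/-- `Qper` is the periodization of a probability measure `Q` on `S^{Λ_n}`: the probability
measure on `S^{ℤ^d}` under which the disjoint blocks `((ω_{j+2nk})_{j∈Λ_n})_{k∈ℤ^d}` are
i.i.d. with law `Q`; it is characterized by the fact that every finite family of blocks is
distributed according to the corresponding finite product of copies of `Q`. -/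
def IsPeriodization {S : Type*} [MeasurableSpace S] {d n : ℕ}
    (Q : Measure (cube d n → S)) (Qper : Measure (Zd d → S)) : Prop :=
  IsProbabilityMeasure Qper ∧
    ∀ K : Finset (Zd d),
      Qper.map (fun ω (k : K) => blockMap S d n ω k)
        = Measure.pi (fun _ : K => Q)

open Set
section aux

variable {d n : ℕ}

/-- residue part of `m` modulo `2n`, valued in `Λ_n`. -/
def jpart (n : ℕ) {d : ℕ} (m : Zd d) : Zd d := fun l => (m l + n) % (2 * n) - n

def kpart (n : ℕ) {d : ℕ} (m : Zd d) : Zd d := fun l => (m l + n) / (2 * n)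

lemma jpart_add_kpart (hn : 1 ≤ n) (m : Zd d) (l : Fin d) :
    jpart n m l + 2 * (n : ℤ) * kpart n m l = m l := by
  have := Int.emod_add_mul_ediv (m l + n) (2 * n)
  simp only [jpart, kpart]
  omega

lemma jpart_mem_cube (hn : 1 ≤ n) (m : Zd d) : jpart n m ∈ cube d n := by
  have h2 : (0:ℤ) < 2 * n := by positivity
  simp only [cube, Finset.mem_Icc]
  constructor <;> intro l <;> simp only [jpart, Pi.le_def]
  · have := Int.emod_nonneg (m l + n) (by omega : (2 * (n:ℤ)) ≠ 0)
    omega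
  · have := Int.emod_lt_of_pos (m l + n) h2
    omega

lemma jpart_eq_self (hn : 1 ≤ n) {m : Zd d} (hm : m ∈ cube d n) : jpart n m = m := by
  simp only [cube, Finset.mem_Icc] at hm
  funext l
  have h1 := hm.1 l
  have h2 := hm.2 l
  simp only at h1 h2
  have : (m l + n) % (2 * n) = m l + n := Int.emod_eq_of_lt (by omega) (by omega)
  simp [jpart, this]

lemma jpart_add_mul (hn : 1 ≤ n) (m t : Zd d) :
    jpart n (fun l => m l + 2 * (n : ℤ) * t l) = jpart n m := by
  funext l
  simp only [jpart]
  have : m l + 2 * (n:ℤ) * t l + n = m l + n + 2 * n * t l := by ring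
  rw [this, Int.add_mul_emod_self_left]

end aux

section meas

variable {S : Type*} [MeasurableSpace S] {d n : ℕ}

lemma measurable_shift (i : Zd d) : Measurable (shift S i) :=
  measurable_pi_lambda _ fun j => measurable_pi_apply (j + i)

lemma measurable_blockFn (K : Finset (Zd d)) :
    Measurable (fun ω (k : K) => blockMap S d n ω k) :=
  measurable_pi_lambda _ fun k => measurable_pi_lambda _ fun j =>
    measurable_pi_apply _

end meas

section piB

lemma pi_map_precomp {ι ι' : Type*} [Fintype ι] [Fintype ι'] (e : ι ≃ ι')
    {X : Type*} [MeasurableSpace X] (Q : Measure X) [SigmaFinite Q] :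
    (Measure.pi fun _ : ι' => Q).map (fun b (k : ι) => b (e k))
      = Measure.pi fun _ : ι => Q := by
  have hmeas : Measurable (fun (b : ι' → X) (k : ι) => b (e k)) :=
    measurable_pi_lambda _ fun k => measurable_pi_apply (e k)
  refine (Measure.pi_eq fun s hs => ?_).symm
  rw [Measure.map_apply hmeas (MeasurableSet.univ_pi hs)]
  have hpre : (fun (b : ι' → X) (k : ι) => b (e k)) ⁻¹' (univ.pi s)
      = univ.pi (fun k' => s (e.symm k')) := by
    ext b
    simp only [mem_preimage, Set.mem_pi, mem_univ, forall_true_left]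
    constructor
    · intro h k'; simpa using h (e.symm k')
    · intro h k; simpa using h (e k)
  rw [hpre, Measure.pi_pi]
  exact Fintype.prod_equiv e.symm _ _ fun k' => rfl

end piB

section ext

variable {S : Type*} [MeasurableSpace S] {d n : ℕ}

lemma ext_of_map_blocks (hn : 1 ≤ n) {μ ν : Measure (Zd d → S)}
    [IsProbabilityMeasure μ] [IsProbabilityMeasure ν]
    (h : ∀ K : Finset (Zd d),
      μ.map (fun ω (k : K) => blockMap S d n ω k)
        = ν.map (fun ω (k : K) => blockMap S d n ω k)) : μ = ν := by
  refine ext_of_generate_finite (measurableCylinders fun _ : Zd d => S)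
    generateFrom_measurableCylinders.symm isPiSystem_measurableCylinders ?_ (by simp)
  intro t ht
  obtain ⟨s₀, T, hT, rfl⟩ := (mem_measurableCylinders t).1 ht
  classical
  set K : Finset (Zd d) := s₀.image (kpart n) with hK
  have hgmem : ∀ m : s₀, kpart n (m : Zd d) ∈ K := fun m =>
    Finset.mem_image_of_mem _ m.2
  set g : (K → (cube d n → S)) → (s₀ → S) :=
    fun b m => b ⟨kpart n m, hgmem m⟩ ⟨jpart n m, jpart_mem_cube hn _⟩ with hg
  have hgmeas : Measurable g :=
    measurable_pi_lambda _ fun m =>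
      ((measurable_pi_apply _).comp (measurable_pi_apply _ : Measurable fun b : K → (cube d n → S) => b _))
  have hcomp : (g ∘ fun ω (k : K) => blockMap S d n ω k) = s₀.restrict := by
    funext ω
    funext m
    show blockMap S d n ω (kpart n m) ⟨jpart n m, _⟩ = ω m
    simp only [blockMap]
    congr 1
    funext l
    exact jpart_add_kpart hn m l
  have key : ∀ ρ : Measure (Zd d → S),
      ρ (cylinder s₀ T) = ρ.map (fun ω (k : K) => blockMap S d n ω k) (g ⁻¹' T) := by
    intro ρ
    rw [Measure.map_apply (measurable_blockFn K) (hgmeas hT)]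
    congr 1
    rw [cylinder, ← hcomp]
    rfl
  rw [key μ, key ν, h K]

end ext

section per

variable {S : Type*} [MeasurableSpace S] {d n : ℕ}

lemma qper_shift_periodic (hn : 1 ≤ n) {Q : Measure (cube d n → S)}
    [IsProbabilityMeasure Q] {Qper : Measure (Zd d → S)}
    (hper : IsPeriodization Q Qper) (k₀ : Zd d) :
    Qper.map (shift S (fun l => 2 * (n : ℤ) * k₀ l)) = Qper := by
  classical
  obtain ⟨hprob, hblocks⟩ := hper
  haveI := hprob
  set v : Zd d := fun l => 2 * (n : ℤ) * k₀ l with hv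
  haveI : IsProbabilityMeasure (Qper.map (shift S v)) :=
    Measure.isProbabilityMeasure_map (measurable_shift v).aemeasurable
  refine ext_of_map_blocks hn fun K => ?_
  set K' : Finset (Zd d) := K.image (fun k => k + k₀) with hK'
  have hmem : ∀ k : K, (k : Zd d) + k₀ ∈ K' := fun k => Finset.mem_image_of_mem _ k.2
  set e : (K : Type _) ≃ (K' : Type _) :=
    { toFun := fun k => ⟨(k : Zd d) + k₀, hmem k⟩
      invFun := fun k' => ⟨(k' : Zd d) - k₀, by
        obtain ⟨a, ha, hak⟩ := Finset.mem_image.1 k'.2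
        rw [← hak]; simpa using ha⟩
      left_inv := fun k => Subtype.ext (by simp)
      right_inv := fun k' => Subtype.ext (by simp) } with he
  have hpre : Measurable (fun (b : K' → (cube d n → S)) (k : K) => b (e k)) :=
    measurable_pi_lambda _ fun k => measurable_pi_apply (e k)
  rw [Measure.map_map (measurable_blockFn K) (measurable_shift v)]
  have h1 : ((fun ω (k : K) => blockMap S d n ω k) ∘ shift S v)
      = (fun (b : K' → (cube d n → S)) (k : K) => b (e k))
        ∘ (fun ω (k' : K') => blockMap S d n ω k') := by
    funext ω
    funext k
    show blockMap S d n (shift S v ω) k = blockMap S d n ω ((k : Zd d) + k₀)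
    funext j
    simp only [blockMap, shift]
    congr 1
    funext l
    simp only [Pi.add_apply, hv]
    ring
  rw [h1, ← Measure.map_map hpre (measurable_blockFn K'), hblocks K',
    pi_map_precomp e Q, hblocks K]

end per

/-- The averaged periodization
`bar Q = (2n)^{-d} Σ_{i ∈ Λ_n} Q^per ∘ θ_i^{-1}` of a probability measure `Q` on
`S^{Λ_n}` is shift-invariant. -/
theorem averaged_periodization_shiftInvariant
    {d : ℕ} (hd : 1 ≤ d) {S : Type*} [MeasurableSpace S]
    (n : ℕ) (hn : 1 ≤ n)
    (Q : Measure (cube d n → S)) [IsProbabilityMeasure Q]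
    (Qper : Measure (Zd d → S)) (hper : IsPeriodization Q Qper) :
    ShiftInvariant
      (((2 * n : ℝ≥0∞) ^ d)⁻¹ • ∑ i ∈ cube d n, Qper.map (shift S i)) := by
  intro j
  rw [Measure.map_smul]
  congr 1
  have hsum : ∀ s : Finset (Zd d),
      (∑ i ∈ s, Qper.map (shift S i)).map (shift S j)
        = ∑ i ∈ s, (Qper.map (shift S i)).map (shift S j) := by
    intro s
    induction s using Finset.induction with
    | empty => simp
    | insert _ _ hmem ih =>
        rw [Finset.sum_insert hmem, Finset.sum_insert hmem,
          Measure.map_add _ _ (measurable_shift j), ih]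
  rw [hsum]
  have hterm : ∀ i : Zd d,
      (Qper.map (shift S i)).map (shift S j) = Qper.map (shift S (jpart n (i + j))) := by
    intro i
    rw [Measure.map_map (measurable_shift j) (measurable_shift i)]
    have h1 : shift S j ∘ shift S i = shift S (i + j) := by
      funext ω m
      show ω (m + j + i) = ω (m + (i + j))
      congr 1
      funext l
      simp only [Pi.add_apply]
      ring
    rw [h1]
    have h2 : shift S (i + j)
        = shift S (jpart n (i + j)) ∘ shift S (fun l => 2 * (n : ℤ) * kpart n (i + j) l) := by
      funext ω m
      show ω (m + (i + j)) = ω (m + jpart n (i + j) + fun l => 2 * (n : ℤ) * kpart n (i + j) l)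
      congr 1
      funext l
      have := jpart_add_kpart hn (i + j) l
      simp only [Pi.add_apply] at this ⊢
      omega
    rw [h2, ← Measure.map_map (measurable_shift _) (measurable_shift _),
      qper_shift_periodic hn hper]
  simp_rw [hterm]
  refine Finset.sum_nbij' (fun i => jpart n (i + j)) (fun b => jpart n (b - j))
    (fun i _ => jpart_mem_cube hn _) (fun b _ => jpart_mem_cube hn _) ?_ ?_ (fun i _ => rfl)
  · intro i hi
    have hrw : jpart n (i + j) - j = fun l => i l + 2 * (n : ℤ) * (-(kpart n (i + j) l)) := by
      funext l
      have h := jpart_add_kpart hn (i + j) l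
      simp only [Pi.sub_apply, Pi.add_apply] at h ⊢
      linarith
    show jpart n (jpart n (i + j) - j) = i
    rw [hrw, jpart_add_mul hn, jpart_eq_self hn hi]
  · intro b hb
    have hrw : jpart n (b - j) + j = fun l => b l + 2 * (n : ℤ) * (-(kpart n (b - j) l)) := by
      funext l
      have h := jpart_add_kpart hn (b - j) l
      simp only [Pi.sub_apply, Pi.add_apply] at h ⊢
      linarith
    show jpart n (jpart n (b - j) + j) = b
    rw [hrw, jpart_add_mul hn, jpart_eq_self hn hb]
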